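/- arXiv:1709.05954 — 4 statements merged into one kernel-verified Lean document; each statement's English description precedes it below -/
import Mathlib

section
/- Let v be the vertex sequence of a walk ⟨f | g⟩_m and let R ≥ 1. If f(n + R) ≡ f(n) (mod m) and g(n + R) = g(n) for all n ≥ 1, then v(R·k + i) = k·v(R) + v(i) for all natural numbers k and i; in particular v(R·k + i) − v(R·k) = v(i), so the walk is repetitive with repetition index R and repetition figure v(0), v(1), …, v(R). -/
open Complex Finset

/-- If `f` is `R`-periodic modulo `m` and `g` is `R`-periodic (for `n ≥ 1`), then the
walk `⟨f | g⟩_m` satisfies `v(Rk + i) = k·v(R) + v(i)` for all `k, i`; in particular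
it is repetitive with repetition index `R` and repetition figure `v(0), …, v(R)`. -/
theorem stmt_3 (f : ℕ → ℕ) (g : ℕ → ℝ) (m : ℕ) (hm : 1 ≤ m) (v : ℕ → ℂ)
    (hv : ∀ n, v n = ∑ t ∈ Finset.Icc 1 n,
      (g t : ℂ) * Complex.exp (2 * (Real.pi : ℂ) * Complex.I * (f t : ℂ) / (m : ℂ)))
    (R : ℕ) (hR : 1 ≤ R)
    (hf : ∀ n, 1 ≤ n → f (n + R) % m = f n % m)
    (hg : ∀ n, 1 ≤ n → g (n + R) = g n) :
    ∀ k i : ℕ, v (R * k + i) = (k : ℂ) * v R + v i := by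
  set w : ℕ → ℂ := fun t => (g t : ℂ) *
    Complex.exp (2 * (Real.pi : ℂ) * Complex.I * (f t : ℂ) / (m : ℂ)) with hw
  have hm0 : (m : ℂ) ≠ 0 := Nat.cast_ne_zero.mpr (by omega)
  have key : ∀ c : ℕ, Complex.exp (2 * (Real.pi : ℂ) * Complex.I * (c : ℂ) / (m : ℂ)) =
      Complex.exp (2 * (Real.pi : ℂ) * Complex.I * ((c % m : ℕ) : ℂ) / (m : ℂ)) := by
    intro c
    conv_lhs => rw [← Nat.div_add_mod c m]
    have : (2 * (Real.pi : ℂ) * Complex.I * (((m * (c / m) + c % m : ℕ) : ℕ) : ℂ) / (m : ℂ))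
        = ((c / m : ℕ) : ℂ) * (2 * (Real.pi : ℂ) * Complex.I)
          + 2 * (Real.pi : ℂ) * Complex.I * ((c % m : ℕ) : ℂ) / (m : ℂ) := by
      push_cast
      field_simp
    rw [this, Complex.exp_add, Complex.exp_nat_mul_two_pi_mul_I, one_mul]
  have hexp : ∀ a b : ℕ, a % m = b % m →
      Complex.exp (2 * (Real.pi : ℂ) * Complex.I * (a : ℂ) / (m : ℂ)) =
      Complex.exp (2 * (Real.pi : ℂ) * Complex.I * (b : ℂ) / (m : ℂ)) := by
    intro a b hab
    rw [key a, key b, hab]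
  have hwp : ∀ t, 1 ≤ t → w (t + R) = w t := by
    intro t ht
    simp only [hw]
    rw [hg t ht, hexp _ _ (hf t ht)]
  have hstep : ∀ n, v (n + R) = v n + v R := by
    intro n
    induction n with
    | zero => simp [hv 0, hv R]
    | succ n ih =>
      have h1 : v (n + 1 + R) = v (n + R) + w (n + 1 + R) := by
        rw [hv (n + 1 + R), hv (n + R), show n + 1 + R = (n + R) + 1 by ring,
          Finset.sum_Icc_succ_top (by omega : 1 ≤ n + R + 1)]
      have h2 : v (n + 1) = v n + w (n + 1) := by
        rw [hv (n + 1), hv n, Finset.sum_Icc_succ_top (by omega : 1 ≤ n + 1)]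
      rw [h1, show n + 1 + R = (n + 1) + R by ring, hwp (n + 1) (by omega), ih, h2]
      ring
  intro k i
  induction k with
  | zero => simp
  | succ k ih =>
    have : R * (k + 1) + i = (R * k + i) + R := by ring
    rw [this, hstep, ih]
    push_cast
    ring
end

section
/- Let v be the vertex sequence of a walk ⟨f | g⟩_m and let R ≥ 1 satisfy f(n + R) ≡ f(n) (mod m) and g(n + R) = g(n) for all n ≥ 1. If v(R) ≠ 0, then the walk is unbounded: for every real B there exists n with |v(n)| > B (indeed |v(R·k)| = k·|v(R)| → ∞). -/
open Complex Finset

/-- If `f` is `R`-periodic modulo `m` and `g` is `R`-periodic (for `n ≥ 1`), and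
`v(R) ≠ 0`, then the walk `⟨f | g⟩_m` is unbounded: indeed
`|v(Rk)| = k·|v(R)| → ∞`, so for every `B` some vertex satisfies `|v(n)| > B`. -/
theorem stmt_5 (f : ℕ → ℕ) (g : ℕ → ℝ) (m : ℕ) (hm : 1 ≤ m) (v : ℕ → ℂ)
    (hv : ∀ n, v n = ∑ t ∈ Finset.Icc 1 n,
      (g t : ℂ) * Complex.exp (2 * (Real.pi : ℂ) * Complex.I * (f t : ℂ) / (m : ℂ)))
    (R : ℕ) (hR : 1 ≤ R)
    (hf : ∀ n, 1 ≤ n → f (n + R) % m = f n % m)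
    (hg : ∀ n, 1 ≤ n → g (n + R) = g n)
    (hvR : v R ≠ 0) :
    (∀ k : ℕ, ‖v (R * k)‖ = (k : ℝ) * ‖v R‖) ∧
    (∀ B : ℝ, ∃ n, B < ‖v n‖) := by
  have hm0 : (m : ℂ) ≠ 0 := Nat.cast_ne_zero.mpr (by omega)
  set h : ℕ → ℂ := fun t => (g t : ℂ) *
      Complex.exp (2 * (Real.pi : ℂ) * Complex.I * (f t : ℂ) / (m : ℂ)) with hh
  have base : ∀ a : ℕ, Complex.exp (2 * (Real.pi : ℂ) * Complex.I * (a : ℂ) / (m : ℂ)) =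
      Complex.exp (2 * (Real.pi : ℂ) * Complex.I * ((a % m : ℕ) : ℂ) / (m : ℂ)) := by
    intro a
    conv_lhs => rw [← Nat.div_add_mod a m]
    push_cast
    rw [show 2 * (Real.pi : ℂ) * Complex.I * ((m : ℂ) * ((a / m : ℕ) : ℂ) +
        ((a % m : ℕ) : ℂ)) / (m : ℂ)
        = ((a / m : ℕ) : ℂ) * (2 * (Real.pi : ℂ) * Complex.I) +
          2 * (Real.pi : ℂ) * Complex.I * ((a % m : ℕ) : ℂ) / (m : ℂ) by
      field_simp]
    rw [Complex.exp_add]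
    norm_num [Complex.exp_nat_mul_two_pi_mul_I]
  have hper : ∀ t, 1 ≤ t → h (t + R) = h t := by
    intro t ht
    simp only [hh]
    rw [hg t ht, base (f (t + R)), base (f t), hf t ht]
  have hperk : ∀ k t, 1 ≤ t → h (t + R * k) = h t := by
    intro k
    induction k with
    | zero => simp
    | succ k ih =>
      intro t ht
      have : t + R * (k + 1) = (t + R * k) + R := by ring
      rw [this, hper _ (by omega), ih t ht]
  have hstep : ∀ k, v (R * (k + 1)) = v (R * k) + v R := by
    intro k
    rw [hv, hv, hv]
    have e1 : ∀ n : ℕ, Finset.Icc 1 n = Finset.Ioc 0 n := by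
      intro n; ext x; simp [Nat.lt_iff_add_one_le]
    simp only [e1]
    have hle1 : (0 : ℕ) ≤ R * k := Nat.zero_le _
    have hle2 : R * k ≤ R * (k + 1) := by nlinarith
    rw [← Finset.sum_Ioc_consecutive _ hle1 hle2]
    congr 1
    have : Finset.Ioc (R * k) (R * (k + 1)) =
        Finset.map (addLeftEmbedding (R * k)) (Finset.Ioc 0 R) := by
      rw [Finset.map_add_left_Ioc]
      congr 1
    rw [this, Finset.sum_map]
    apply Finset.sum_congr rfl
    intro t ht
    simp only [Finset.mem_Ioc] at ht
    have : addLeftEmbedding (R * k) t = t + R * k := by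
      simp [addLeftEmbedding, add_comm]
    rw [this, hperk k t (by omega)]
  have hmul : ∀ k : ℕ, v (R * k) = (k : ℂ) * v R := by
    intro k
    induction k with
    | zero => simp [hv]
    | succ k ih => rw [hstep k, ih]; push_cast; ring
  have habs : ∀ k : ℕ, ‖v (R * k)‖ = (k : ℝ) * ‖v R‖ := by
    intro k; rw [hmul k, norm_mul]; simp
  refine ⟨habs, fun B => ?_⟩
  have hpos : 0 < ‖v R‖ := by
    simpa [norm_pos_iff] using hvR
  obtain ⟨k, hk⟩ := exists_nat_gt (B / ‖v R‖)
  refine ⟨R * k, ?_⟩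
  rw [habs k]
  calc B = (B / ‖v R‖) * ‖v R‖ := by field_simp
    _ < (k : ℝ) * ‖v R‖ := by
        exact mul_lt_mul_of_pos_right hk hpos
end

section
/- Let f : ℕ → ℕ satisfy f(n + m) ≡ f(n) (mod m) for all n ≥ 1, and let v be the vertex sequence of the walk ⟨f⟩_m (unit edge lengths, g ≡ 1). Then the walk is bounded if and only if ∑_{t=1}^{m} exp(2·π·I·f(t)/m) = 0, and in that case it is closed, i.e. v(n + m) = v(n) for all n. -/
open Complex Finset

/-- For a walk `⟨f⟩_m` with unit edge lengths and `f(n + m) ≡ f(n) (mod m)` for all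
`n ≥ 1`, the walk is bounded iff `∑_{t=1}^{m} exp(2πi·f(t)/m) = 0`, and in that case
it is closed: `v(n + m) = v(n)` for all `n`. -/
theorem stmt_6 (f : ℕ → ℕ) (m : ℕ) (hm : 1 ≤ m)
    (hf : ∀ n, 1 ≤ n → f (n + m) % m = f n % m) (v : ℕ → ℂ)
    (hv : ∀ n, v n = ∑ t ∈ Finset.Icc 1 n,
      Complex.exp (2 * (Real.pi : ℂ) * Complex.I * (f t : ℂ) / (m : ℂ))) :
    ((∃ B : ℝ, ∀ n, ‖v n‖ ≤ B) ↔
      (∑ t ∈ Finset.Icc 1 m,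
        Complex.exp (2 * (Real.pi : ℂ) * Complex.I * (f t : ℂ) / (m : ℂ))) = 0) ∧
    ((∑ t ∈ Finset.Icc 1 m,
        Complex.exp (2 * (Real.pi : ℂ) * Complex.I * (f t : ℂ) / (m : ℂ))) = 0 →
      ∀ n, v (n + m) = v n) := by
  have hm0 : (m : ℂ) ≠ 0 := Nat.cast_ne_zero.mpr (by omega)
  set E : ℕ → ℂ := fun t => Complex.exp (2 * (Real.pi : ℂ) * Complex.I * (f t : ℂ) / (m : ℂ)) with hE
  set S : ℂ := ∑ t ∈ Finset.Icc 1 m, E t with hS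
  have key : ∀ a : ℕ, Complex.exp (2 * (Real.pi : ℂ) * Complex.I * (a : ℂ) / (m : ℂ)) =
      Complex.exp (2 * (Real.pi : ℂ) * Complex.I * ((a % m : ℕ) : ℂ) / (m : ℂ)) := by
    intro a
    have ha : (a : ℂ) = (m : ℂ) * ((a / m : ℕ) : ℂ) + ((a % m : ℕ) : ℂ) := by
      exact_mod_cast (Nat.div_add_mod a m).symm
    rw [ha]
    have : 2 * (Real.pi : ℂ) * Complex.I * ((m : ℂ) * ((a / m : ℕ) : ℂ) + ((a % m : ℕ) : ℂ)) / (m : ℂ)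
        = ((a / m : ℕ) : ℂ) * (2 * (Real.pi : ℂ) * Complex.I)
          + 2 * (Real.pi : ℂ) * Complex.I * ((a % m : ℕ) : ℂ) / (m : ℂ) := by
      field_simp
    rw [this, Complex.exp_add, Complex.exp_nat_mul, Complex.exp_two_pi_mul_I, one_pow, one_mul]
  have hEper : ∀ t, 1 ≤ t → E (t + m) = E t := by
    intro t ht
    simp only [hE]
    rw [key (f (t + m)), key (f t), hf t ht]
  have hvstep : ∀ n, v (n + 1) = v n + E (n + 1) := by
    intro n
    rw [hv, hv, Finset.sum_Icc_succ_top (by omega : 1 ≤ n + 1)]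
  have hv0 : v 0 = 0 := by rw [hv]; simp
  have hshift : ∀ n, v (n + m) = v n + S := by
    intro n
    induction n with
    | zero => rw [hv0, zero_add, zero_add, hv m]
    | succ n ih =>
        have h1 : n + 1 + m = (n + m) + 1 := by omega
        rw [h1, hvstep (n + m), ih, hvstep n]
        have h2 : n + m + 1 = (n + 1) + m := by omega
        rw [h2, hEper (n + 1) (by omega)]
        ring
  constructor
  · constructor
    · rintro ⟨B, hB⟩
      by_contra hS0
      have hvk : ∀ k : ℕ, v (k * m) = (k : ℂ) * S := by
        intro k
        induction k with
        | zero => simpa using hv0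
        | succ k ih =>
            have : (k + 1) * m = k * m + m := by ring
            rw [this, hshift, ih]
            push_cast
            ring
      have hSpos : 0 < ‖S‖ := by
        exact norm_pos_iff.mpr hS0
      obtain ⟨k, hk⟩ := exists_nat_gt (B / ‖S‖)
      have h1 : ‖v (k * m)‖ = (k : ℝ) * ‖S‖ := by
        rw [hvk, norm_mul, Complex.norm_natCast]
      have h2 := hB (k * m)
      rw [h1] at h2
      have : B < (k : ℝ) * ‖S‖ := by
        rw [div_lt_iff₀ hSpos] at hk
        exact hk
      linarith
    · intro hS0
      -- v n = v (n % m)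
      have hmod : ∀ n, v n = v (n % m) := by
        intro n
        induction n using Nat.strong_induction_on with
        | _ n ih =>
          by_cases h : n < m
          · rw [Nat.mod_eq_of_lt h]
          · have h1 : n = (n - m) + m := by omega
            rw [h1, hshift, hS0, add_zero, ih (n - m) (by omega)]
            congr 1
            simp [Nat.add_mod_right]
      have hne : (Finset.range m).Nonempty := ⟨0, Finset.mem_range.mpr (by omega)⟩
      refine ⟨(Finset.range m).sup' hne (fun r => ‖v r‖), fun n => ?_⟩
      rw [hmod n]
      exact Finset.le_sup' (fun r => ‖v r‖) (Finset.mem_range.mpr (Nat.mod_lt n hm))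
  · intro hS0 n
    rw [hshift, hS0, add_zero]
end

section
/- For every integer m ≥ 1, the walk ⟨n²⟩_m (f(n) = n², g ≡ 1), with vertices v(n) = ∑_{t=1}^n exp(2·π·I·t²/m), is bounded if and only if m ≡ 2 (mod 4); equivalently, v(n + m) = v(n) holds for all n if and only if m ≡ 2 (mod 4). -/
open Complex Finset

namespace Stmt12

noncomputable def ee (m t : ℕ) : ℂ :=
  Complex.exp (2 * (Real.pi : ℂ) * Complex.I * (t : ℂ) ^ 2 / (m : ℂ))

lemma ee_abs (m t : ℕ) : ‖ee m t‖ = 1 := by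
  have h : 2 * (Real.pi : ℂ) * Complex.I * (t : ℂ) ^ 2 / (m : ℂ)
      = ((2 * Real.pi * (t:ℝ)^2 / m : ℝ) : ℂ) * Complex.I := by
    push_cast; ring
  rw [ee, h, Complex.norm_exp_ofReal_mul_I]

lemma ee_add_m {m : ℕ} (hm : 1 ≤ m) (t : ℕ) : ee m (t + m) = ee m t := by
  have hm0 : (m : ℂ) ≠ 0 := Nat.cast_ne_zero.mpr (by omega)
  have h : 2 * (Real.pi : ℂ) * Complex.I * ((t:ℂ) + m) ^ 2 / m
      = 2 * (Real.pi : ℂ) * Complex.I * (t:ℂ)^2 / m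
        + ((2*t+m : ℕ) : ℂ) * (2 * Real.pi * Complex.I) := by
    push_cast; field_simp; ring
  rw [ee, ee]
  push_cast
  rw [h, Complex.exp_add, Complex.exp_nat_mul, Complex.exp_two_pi_mul_I, one_pow, mul_one]

lemma sum_Ioc_shift {m : ℕ} (hm : 1 ≤ m) (n : ℕ) :
    ∑ t ∈ Ioc n (n + m), ee m t = ∑ t ∈ Ioc 0 m, ee m t := by
  induction n with
  | zero => simp
  | succ n ih =>
    have h1 : ∑ t ∈ Ioc n (n + 1 + m), ee m t
        = ∑ t ∈ Ioc n (n+1), ee m t + ∑ t ∈ Ioc (n+1) (n+1+m), ee m t :=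
      (Finset.sum_Ioc_consecutive _ (by omega) (by omega)).symm
    have h2 : ∑ t ∈ Ioc n (n + 1 + m), ee m t
        = ∑ t ∈ Ioc n (n+m), ee m t + ee m (n + m + 1) := by
      rw [show n + 1 + m = (n + m) + 1 by omega]
      exact Finset.sum_Ioc_succ_top (by omega) _
    have h3 : ∑ t ∈ Ioc n (n+1), ee m t = ee m (n+1) := by
      rw [show Ioc n (n+1) = {n+1} from Nat.Ioc_succ_singleton n, Finset.sum_singleton]
    have h4 : ee m (n + m + 1) = ee m (n+1) := by
      rw [show n + m + 1 = (n+1) + m by omega, ee_add_m hm]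
    have key := h1.symm.trans h2
    rw [h3, h4, ih] at key
    -- key : ee m (n+1) + S = G + ee m (n+1)
    have : ee m (n+1) + ∑ t ∈ Ioc (n+1) (n+1+m), ee m t
        = ee m (n+1) + ∑ t ∈ Ioc 0 m, ee m t := by rw [key]; ring
    exact add_left_cancel this

lemma ee_add_half {k : ℕ} (hk : Odd k) (t : ℕ) : ee (2*k) (t + k) = - ee (2*k) t := by
  have hk0 : (k : ℂ) ≠ 0 := Nat.cast_ne_zero.mpr (by rintro rfl; simp at hk)
  have h : 2 * (Real.pi : ℂ) * Complex.I * ((t:ℂ) + k) ^ 2 / ((2*k : ℕ) : ℂ)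
      = 2 * (Real.pi : ℂ) * Complex.I * (t:ℂ)^2 / ((2*k : ℕ) : ℂ)
        + (t : ℂ) * (2 * Real.pi * Complex.I) + (k : ℂ) * (Real.pi * Complex.I) := by
    push_cast; field_simp; ring
  rw [ee, ee]
  push_cast
  push_cast at h
  rw [h, Complex.exp_add, Complex.exp_add]
  rw [show ((t:ℂ) * (2 * Real.pi * Complex.I)) = (t:ℕ) * (2 * Real.pi * Complex.I) by push_cast; ring,
    Complex.exp_nat_mul, Complex.exp_two_pi_mul_I, one_pow, mul_one]
  rw [show ((k:ℂ) * (Real.pi * Complex.I)) = (k:ℕ) * (Real.pi * Complex.I) by push_cast; ring,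
    Complex.exp_nat_mul, Complex.exp_pi_mul_I, hk.neg_one_pow]
  ring

lemma gauss_zero {m : ℕ} (hm2 : m % 4 = 2) : ∑ t ∈ Ioc 0 m, ee m t = 0 := by
  obtain ⟨k, hk, hko⟩ : ∃ k, m = 2 * k ∧ Odd k := ⟨m / 2, by omega, by
    refine Nat.odd_iff.mpr ?_; omega⟩
  subst hk
  have hsplit : ∑ t ∈ Ioc 0 k, ee (2*k) t + ∑ t ∈ Ioc k (2*k), ee (2*k) t
      = ∑ t ∈ Ioc 0 (2*k), ee (2*k) t :=
    Finset.sum_Ioc_consecutive _ (by omega) (by omega)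
  have hre : ∑ t ∈ Ioc k (2*k), ee (2*k) t = ∑ t ∈ Ioc 0 k, ee (2*k) (t + k) := by
    rw [show Ioc k (2*k) = Ioc (0+k) (k+k) by congr 1 <;> omega,
      ← Finset.map_add_right_Ioc, Finset.sum_map]; rfl
  rw [← hsplit, hre]
  rw [← Finset.sum_add_distrib]
  apply Finset.sum_eq_zero
  intro t _
  rw [ee_add_half hko]
  ring

noncomputable def zz (m h : ℕ) : ℂ :=
  Complex.exp (2 * (Real.pi : ℂ) * Complex.I * (2 * (h:ℂ)) / (m : ℂ))

lemma zz_pow_m {m : ℕ} (hm : 1 ≤ m) (h : ℕ) : zz m h ^ m = 1 := by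
  have hm0 : (m : ℂ) ≠ 0 := Nat.cast_ne_zero.mpr (by omega)
  rw [zz, ← Complex.exp_nat_mul]
  rw [show (m:ℂ) * (2 * (Real.pi : ℂ) * Complex.I * (2 * (h:ℂ)) / (m : ℂ))
      = ((2*h : ℕ) : ℤ) * (2 * (Real.pi:ℂ) * Complex.I) by push_cast; field_simp]
  exact Complex.exp_int_mul_two_pi_mul_I _

lemma zz_eq_one {m : ℕ} (hm : 1 ≤ m) {h : ℕ} (hd : m ∣ 2 * h) : zz m h = 1 := by
  have hm0 : (m : ℂ) ≠ 0 := Nat.cast_ne_zero.mpr (by omega)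
  obtain ⟨c, hc⟩ := hd
  rw [zz, show 2 * (Real.pi : ℂ) * Complex.I * (2 * (h:ℂ)) / (m : ℂ)
      = ((c : ℕ) : ℤ) * (2 * (Real.pi:ℂ) * Complex.I) by
    push_cast
    have : (2 * (h:ℂ)) = (m:ℂ) * c := by exact_mod_cast congrArg (Nat.cast : ℕ → ℂ) hc
    rw [div_eq_iff hm0]
    linear_combination (2 * (Real.pi:ℂ) * Complex.I) * this]
  exact Complex.exp_int_mul_two_pi_mul_I _

lemma zz_ne_one {m : ℕ} (hm : 1 ≤ m) {h : ℕ} (hd : ¬ m ∣ 2 * h) : zz m h ≠ 1 := by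
  have hm0 : (m : ℂ) ≠ 0 := Nat.cast_ne_zero.mpr (by omega)
  intro h1
  obtain ⟨n, hn⟩ := Complex.exp_eq_one_iff.mp h1
  apply hd
  have hpi : (2 * (Real.pi:ℂ) * Complex.I) ≠ 0 := by
    simp [Real.pi_ne_zero, Complex.I_ne_zero, Complex.ofReal_ne_zero]
  have h2 : ((2 * h : ℕ) : ℂ) = (n : ℂ) * m := by
    have hn' : (2 * (Real.pi:ℂ) * Complex.I) * ((2 * (h:ℂ)) / m)
        = (2 * (Real.pi:ℂ) * Complex.I) * (n : ℂ) := by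
      linear_combination hn
    have h4 := mul_left_cancel₀ hpi hn'
    rw [div_eq_iff hm0] at h4
    push_cast
    linear_combination h4
  have h3 : ((2 * h : ℕ) : ℤ) = n * m := by exact_mod_cast h2
  have : (m : ℤ) ∣ ((2 * h : ℕ) : ℤ) := ⟨n, by linarith⟩
  exact_mod_cast this

lemma geom_Ioc_zero {m : ℕ} (hm : 1 ≤ m) {z : ℂ} (hzm : z ^ m = 1) (hz : z ≠ 1) :
    ∑ s ∈ Ioc 0 m, z ^ s = 0 := by
  have hins : range (m+1) = insert 0 (Ioc 0 m) := by
    ext x; simp only [Finset.mem_range, Finset.mem_insert, Finset.mem_Ioc]; omega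
  have h1 : ∑ s ∈ range (m+1), z ^ s = 1 + ∑ s ∈ Ioc 0 m, z ^ s := by
    rw [hins, Finset.sum_insert (by simp)]; simp
  have h2 : ∑ s ∈ range (m+1), z ^ s = 1 := by
    rw [geom_sum_eq hz, pow_succ, hzm, one_mul, div_self (sub_ne_zero.mpr hz)]
  have h3 := h1.symm.trans h2
  linear_combination h3

lemma geom_Ioc_m {m : ℕ} : ∑ s ∈ Ioc 0 m, (1:ℂ) ^ s = m := by
  simp

lemma conj_ee_mul {m : ℕ} (hm : 1 ≤ m) (s h : ℕ) :
    (starRingEnd ℂ) (ee m s) * ee m (s + h) = ee m h * zz m h ^ s := by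
  have hm0 : (m : ℂ) ≠ 0 := Nat.cast_ne_zero.mpr (by omega)
  have hconj : (starRingEnd ℂ) (ee m s)
      = Complex.exp (-(2 * (Real.pi : ℂ) * Complex.I * (s:ℂ)^2 / m)) := by
    rw [ee, ← Complex.exp_conj]
    congr 1
    simp only [map_div₀, map_mul, Complex.conj_I, map_pow, map_ofNat, Complex.conj_ofReal,
      Complex.conj_natCast]
    ring
  have hzpow : zz m h ^ s
      = Complex.exp ((s:ℂ) * (2 * (Real.pi:ℂ) * Complex.I * (2*(h:ℂ)) / m)) := by
    rw [zz, ← Complex.exp_nat_mul]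
  rw [hconj, ee, ee, hzpow, ← Complex.exp_add, ← Complex.exp_add]
  congr 1
  push_cast
  field_simp
  ring

lemma conjG_mul_G {m : ℕ} (hm : 1 ≤ m) :
    (starRingEnd ℂ) (∑ t ∈ Ioc 0 m, ee m t) * (∑ t ∈ Ioc 0 m, ee m t)
    = ∑ h ∈ Ioc 0 m, ee m h * ∑ s ∈ Ioc 0 m, zz m h ^ s := by
  rw [map_sum, Finset.sum_mul]
  have step : ∀ s ∈ Ioc 0 m, (starRingEnd ℂ) (ee m s) * ∑ t ∈ Ioc 0 m, ee m t
      = ∑ h ∈ Ioc 0 m, ee m h * zz m h ^ s := by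
    intro s _
    rw [← sum_Ioc_shift hm s,
      show Ioc s (s+m) = Ioc (0+s) (m+s) by congr 1 <;> omega,
      ← Finset.map_add_right_Ioc, Finset.sum_map, Finset.mul_sum]
    refine Finset.sum_congr rfl fun h _ => ?_
    rw [show (addRightEmbedding s) h = h + s from rfl, show h + s = s + h by omega,
      conj_ee_mul hm]
  rw [Finset.sum_congr rfl step, Finset.sum_comm]
  exact Finset.sum_congr rfl fun h _ => (Finset.mul_sum _ _ _).symm

lemma ee_self {m : ℕ} (hm : 1 ≤ m) : ee m m = 1 := by
  have hm0 : (m : ℂ) ≠ 0 := Nat.cast_ne_zero.mpr (by omega)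
  rw [ee, show 2*(Real.pi:ℂ)*Complex.I*(m:ℂ)^2/(m:ℂ) = ((m:ℕ):ℤ)*(2*(Real.pi:ℂ)*Complex.I) by
    push_cast; field_simp]
  exact Complex.exp_int_mul_two_pi_mul_I _

lemma gauss_sq_odd {m : ℕ} (hm : 1 ≤ m) (ho : Odd m) :
    (starRingEnd ℂ) (∑ t ∈ Ioc 0 m, ee m t) * (∑ t ∈ Ioc 0 m, ee m t) = (m : ℂ) := by
  rw [conjG_mul_G hm]
  rw [Finset.sum_eq_single_of_mem m (by simp [Finset.mem_Ioc]; omega)]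
  · rw [zz_eq_one hm ⟨2, by ring⟩, geom_Ioc_m, ee_self hm, one_mul]
  · intro h hmem hne
    have hh : 0 < h ∧ h ≤ m := by simpa [Finset.mem_Ioc] using hmem
    have hnd : ¬ m ∣ 2 * h := by
      intro hd
      have hcop : Nat.Coprime m 2 := by
        rw [Nat.coprime_comm]; simpa using ho
      have : m ∣ h := hcop.dvd_of_dvd_mul_left hd
      have := Nat.le_of_dvd hh.1 this
      omega
    rw [geom_Ioc_zero hm (zz_pow_m hm h) (zz_ne_one hm hnd), mul_zero]

lemma gauss_sq_four {m : ℕ} (hm : 1 ≤ m) (h4 : 4 ∣ m) :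
    (starRingEnd ℂ) (∑ t ∈ Ioc 0 m, ee m t) * (∑ t ∈ Ioc 0 m, ee m t) = 2 * (m : ℂ) := by
  obtain ⟨j, rfl⟩ := h4
  have hj : 1 ≤ j := by omega
  rw [conjG_mul_G hm]
  have hsub : ({2*j, 4*j} : Finset ℕ) ⊆ Ioc 0 (4*j) := by
    intro x hx
    simp only [Finset.mem_insert, Finset.mem_singleton] at hx
    simp only [Finset.mem_Ioc]
    omega
  rw [← Finset.sum_subset hsub]
  · have hne : 2*j ≠ 4*j := by omega
    rw [Finset.sum_pair hne]
    have hz1 : zz (4*j) (2*j) = 1 := zz_eq_one hm ⟨1, by ring⟩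
    have hz2 : zz (4*j) (4*j) = 1 := zz_eq_one hm ⟨2, by ring⟩
    have hee2 : ee (4*j) (2*j) = 1 := by
      have hj0 : (j : ℂ) ≠ 0 := Nat.cast_ne_zero.mpr (by omega)
      rw [ee, show 2*(Real.pi:ℂ)*Complex.I*((2*j:ℕ):ℂ)^2/((4*j:ℕ):ℂ)
          = ((j:ℕ):ℤ)*(2*(Real.pi:ℂ)*Complex.I) by push_cast; field_simp; ring]
      exact Complex.exp_int_mul_two_pi_mul_I _
    rw [hz1, hz2, hee2, ee_self hm, geom_Ioc_m]
    push_cast; ring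
  · intro h hmem hnot
    have hh : 0 < h ∧ h ≤ 4*j := by simpa [Finset.mem_Ioc] using hmem
    simp only [Finset.mem_insert, Finset.mem_singleton, not_or] at hnot
    have hnd : ¬ (4*j) ∣ 2 * h := by
      intro hd
      obtain ⟨c, hc⟩ := hd
      have hcle : c ≤ 2 := by nlinarith [hh.1, hh.2, hj, hc]
      interval_cases c <;> omega
    rw [geom_Ioc_zero hm (zz_pow_m hm h) (zz_ne_one hm hnd), mul_zero]

lemma gauss_ne_zero {m : ℕ} (hm : 1 ≤ m) (h : m % 4 ≠ 2) :
    (∑ t ∈ Ioc 0 m, ee m t) ≠ 0 := by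
  intro hG
  rcases Nat.even_or_odd m with he | ho
  · have h4 : 4 ∣ m := by
      rcases he with ⟨k, hk⟩
      omega
    have := gauss_sq_four hm h4
    rw [hG, mul_zero] at this
    have hm' : (m : ℂ) = 0 := by linear_combination (-1/2 : ℂ) * this
    exact (Nat.cast_ne_zero.mpr (by omega : m ≠ 0)) hm'
  · have := gauss_sq_odd hm ho
    rw [hG, mul_zero] at this
    exact (Nat.cast_ne_zero.mpr (by omega : m ≠ 0)) this.symm

end Stmt12

open Stmt12 in
/-- For every `m ≥ 1`, the walk `⟨n²⟩_m` is bounded iff `m ≡ 2 (mod 4)`;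
equivalently, `v(n + m) = v(n)` for all `n` iff `m ≡ 2 (mod 4)`. -/
theorem stmt_12 (m : ℕ) (hm : 1 ≤ m) (v : ℕ → ℂ)
    (hv : ∀ n, v n = ∑ t ∈ Finset.Icc 1 n,
      Complex.exp (2 * (Real.pi : ℂ) * Complex.I * (t : ℂ) ^ 2 / (m : ℂ))) :
    ((∃ B : ℝ, ∀ n, ‖v n‖ ≤ B) ↔ m % 4 = 2) ∧
    ((∀ n, v (n + m) = v n) ↔ m % 4 = 2) := by
  have hv' : ∀ n, v n = ∑ t ∈ Ioc 0 n, ee m t := by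
    intro n; rw [hv n, ← Finset.Icc_add_one_left_eq_Ioc]; rfl
  set G := ∑ t ∈ Ioc 0 m, ee m t with hGdef
  have hper : ∀ n, v (n + m) = v n + G := by
    intro n
    rw [hv', hv',
      ← Finset.sum_Ioc_consecutive (fun t => ee m t) (Nat.zero_le n) (by omega : n ≤ n + m),
      sum_Ioc_shift hm n]
  have hv0 : v 0 = 0 := by rw [hv']; simp
  have hvk : ∀ k : ℕ, v (k * m) = (k : ℂ) * G := by
    intro k; induction k with
    | zero => simpa using hv0
    | succ k ih =>
      rw [show (k+1)*m = k*m + m by ring, hper, ih]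
      push_cast; ring
  have hGiff : (∀ n, v (n + m) = v n) ↔ G = 0 := by
    constructor
    · intro hp
      have h1 := hp 0
      rw [hper 0] at h1
      linear_combination h1
    · intro h0 n; rw [hper, h0, add_zero]
  have hGm : G = 0 ↔ m % 4 = 2 := by
    constructor
    · intro h0; by_contra hne; exact gauss_ne_zero hm hne h0
    · exact gauss_zero
  constructor
  · constructor
    · rintro ⟨B, hB⟩
      by_contra hne
      have hGne : G ≠ 0 := gauss_ne_zero hm hne
      have hpos : 0 < ‖G‖ := norm_pos_iff.mpr hGne
      obtain ⟨k, hk⟩ := exists_nat_gt (B / ‖G‖)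
      have h1 : ‖v (k * m)‖ = k * ‖G‖ := by
        rw [hvk k, norm_mul, Complex.norm_natCast]
      have h2 := hB (k * m)
      rw [h1] at h2
      rw [div_lt_iff₀ hpos] at hk
      linarith
    · intro h2
      have h0 : G = 0 := hGm.mpr h2
      have hq : ∀ q n, v (n + q * m) = v n := by
        intro q
        induction q with
        | zero => simp
        | succ q ih =>
          intro n
          rw [show n + (q+1)*m = (n + q*m) + m by ring, hper, h0, add_zero, ih]
      have hq' : ∀ n, v n = v (n % m) := fun n => by
        conv_lhs => rw [show n = n % m + m * (n / m) from (Nat.mod_add_div n m).symm,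
          Nat.mul_comm m (n / m)]
        exact hq _ _
      refine ⟨m, fun n => ?_⟩
      rw [hq' n, hv']
      calc ‖∑ t ∈ Ioc 0 (n % m), ee m t‖
          ≤ ∑ t ∈ Ioc 0 (n % m), ‖ee m t‖ := norm_sum_le _ _
        _ = ((n % m : ℕ) : ℝ) := by simp [ee_abs]
        _ ≤ (m : ℝ) := by
            exact_mod_cast Nat.le_of_lt (Nat.mod_lt n (by omega))
  · exact hGiff.trans hGm
end
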